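/- Every diffuse group satisfies the unique product property. -/
import Mathlib

def IsDiffuse (G : Type*) [Group G] : Prop :=
  ∀ A : Finset G, A.Nonempty →
    ∃ a ∈ A, ∀ g : G, g ≠ 1 → g * a ∉ A ∨ g⁻¹ * a ∉ A

def HasUniqueProduct (G : Type*) [Group G] : Prop :=
  ∀ X Y : Finset G, X.Nonempty → Y.Nonempty →
    ∃ g : G, ∃! p : G × G, p.1 ∈ X ∧ p.2 ∈ Y ∧ p.1 * p.2 = g

theorem diffuse_uniqueProduct {G : Type*} [Group G] (h : IsDiffuse G) :
    HasUniqueProduct G := by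
  intro X Y hX hY
  classical
  obtain ⟨x0, hx0⟩ := hX
  obtain ⟨y0, hy0⟩ := hY
  set A := (X ×ˢ Y).image (fun p => p.1 * p.2) with hA
  have hmem : ∀ x ∈ X, ∀ y ∈ Y, x * y ∈ A := fun x hx y hy =>
    Finset.mem_image.2 ⟨(x, y), Finset.mk_mem_product hx hy, rfl⟩
  obtain ⟨a, haA, ha⟩ := h A ⟨x0 * y0, hmem _ hx0 _ hy0⟩
  obtain ⟨⟨x1, y1⟩, hp, hxy⟩ := Finset.mem_image.1 haA
  obtain ⟨hx1, hy1⟩ := Finset.mem_product.1 hp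
  refine ⟨a, ⟨(x1, y1), ⟨hx1, hy1, hxy⟩, ?_⟩⟩
  rintro ⟨x2, y2⟩ ⟨hx2, hy2, hxy2⟩
  by_contra hne
  have hx12 : x2 ≠ x1 := by
    rintro rfl
    exact hne (Prod.ext rfl (mul_left_cancel (hxy2.trans hxy.symm)))
  have hg : x2 * x1⁻¹ ≠ 1 := fun hgg => hx12 (by
    have := mul_inv_eq_one.1 hgg
    exact this)
  have h1 : (x2 * x1⁻¹) * a ∈ A := by
    rw [← hxy]
    have : (x2 * x1⁻¹) * (x1 * y1) = x2 * y1 := by group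
    rw [this]; exact hmem _ hx2 _ hy1
  have h2 : (x2 * x1⁻¹)⁻¹ * a ∈ A := by
    rw [← hxy2]
    have : (x2 * x1⁻¹)⁻¹ * (x2 * y2) = x1 * y2 := by group
    rw [this]; exact hmem _ hx1 _ hy2
  rcases ha _ hg with h' | h' <;> exact h' ‹_›
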